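/- Let M, K ∈ ℕ with K ≥ 1, let w : Fin M → ℝ satisfy 0 ≤ w j ≤ 1 for all j, and fix i ∈ Fin M. Then ∑_{S ⊆ (Fin M) \ {i}, |{j ∈ S : j < i}| ≤ K−1} (∏_{j ∈ S} w j) · (∏_{j ∉ S ∪ {i}} (1 − w j)) = ∑_{T ⊆ {j : j < i}, |T| ≤ K−1} (∏_{t ∈ T} w t) · (∏_{t < i, t ∉ T} (1 − w t)). That is, the probability that point i belongs to the K smallest-indexed elements of S ∪ {i} equals the probability that a Poisson-binomial variable with success probabilities w_1, …, w_{i−1} is at most K−1. -/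
import Mathlib

/-- The probability that point `i` belongs to the `K` smallest-indexed elements of
`S ∪ {i}` equals the lower-tail probability at level `K-1` of a Poisson-binomial
variable with success probabilities `w_1, …, w_{i-1}`. -/
theorem topK_prob_eq_poisson_binomial_tail (M K : ℕ) (hK : 1 ≤ K) (w : Fin M → ℝ)
    (hw : ∀ j, 0 ≤ w j ∧ w j ≤ 1) (i : Fin M) :
    (∑ S ∈ ({i}ᶜ : Finset (Fin M)).powerset.filter
          (fun S => (S.filter (· < i)).card ≤ K - 1),
        (∏ j ∈ S, w j) * ∏ j ∈ (S ∪ {i})ᶜ, (1 - w j))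
      = ∑ T ∈ (Finset.Iio i).powerset.filter (fun T => T.card ≤ K - 1),
          (∏ t ∈ T, w t) * ∏ t ∈ (Finset.Iio i) \ T, (1 - w t) := by
  classical
  set A : Finset (Fin M) := Finset.Iio i with hA
  set B : Finset (Fin M) := Finset.Ioi i with hB
  have hAB : Disjoint A B := by
    rw [Finset.disjoint_left]
    intro a ha hb
    simp only [hA, hB, Finset.mem_Iio, Finset.mem_Ioi] at ha hb
    exact absurd hb (not_lt.mpr ha.le)
  have hABc : A ∪ B = ({i}ᶜ : Finset (Fin M)) := by
    ext j
    simp only [hA, hB, Finset.mem_union, Finset.mem_Iio, Finset.mem_Ioi,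
      Finset.mem_compl, Finset.mem_singleton]
    exact ne_iff_lt_or_gt.symm
  have hone : ∑ U ∈ B.powerset, ((∏ j ∈ U, w j) * ∏ j ∈ B \ U, (1 - w j)) = 1 := by
    rw [← Finset.prod_add]
    simp
  set filt := (Finset.Iio i).powerset.filter (fun T => T.card ≤ K - 1) with hfilt
  have key : (∑ S ∈ ({i}ᶜ : Finset (Fin M)).powerset.filter
          (fun S => (S.filter (· < i)).card ≤ K - 1),
        (∏ j ∈ S, w j) * ∏ j ∈ (S ∪ {i})ᶜ, (1 - w j))
      = ∑ p ∈ filt ×ˢ B.powerset,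
          ((∏ t ∈ p.1, w t) * ∏ t ∈ A \ p.1, (1 - w t)) *
          ((∏ j ∈ p.2, w j) * ∏ j ∈ B \ p.2, (1 - w j)) := by
    apply Finset.sum_nbij' (fun S => (S ∩ A, S ∩ B)) (fun p => p.1 ∪ p.2)
    · intro S hS
      simp only [Finset.mem_filter, Finset.mem_powerset] at hS
      obtain ⟨hSsub, hScard⟩ := hS
      simp only [Finset.mem_product, hfilt, Finset.mem_filter, Finset.mem_powerset]
      refine ⟨⟨Finset.inter_subset_right, ?_⟩, Finset.inter_subset_right⟩
      have h : S ∩ A = S.filter (· < i) := by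
        ext j; simp [hA, Finset.mem_Iio]
      rw [h]; exact hScard
    · intro p hp
      simp only [Finset.mem_product, hfilt, Finset.mem_filter, Finset.mem_powerset] at hp
      obtain ⟨⟨hT, hTc⟩, hU⟩ := hp
      simp only [Finset.mem_filter, Finset.mem_powerset]
      constructor
      · rw [← hABc]; exact Finset.union_subset_union hT hU
      · have h : (p.1 ∪ p.2).filter (· < i) = p.1 := by
          ext j
          simp only [Finset.mem_filter, Finset.mem_union]
          constructor
          · rintro ⟨hj | hj, hlt⟩
            · exact hj
            · exact absurd hlt (not_lt.mpr (Finset.mem_Ioi.mp (hU hj)).le)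
          · intro hj
            exact ⟨Or.inl hj, Finset.mem_Iio.mp (hT hj)⟩
        rw [h]; exact hTc
    · intro S hS
      simp only [Finset.mem_filter, Finset.mem_powerset] at hS
      rw [← Finset.inter_union_distrib_left, hABc, Finset.inter_eq_left.mpr hS.1]
    · intro p hp
      simp only [Finset.mem_product, hfilt, Finset.mem_filter, Finset.mem_powerset] at hp
      obtain ⟨⟨hT, _⟩, hU⟩ := hp
      have hdisj : Disjoint p.1 p.2 := hAB.mono hT hU
      have h1 : (p.1 ∪ p.2) ∩ A = p.1 := by
        rw [Finset.union_inter_distrib_right, Finset.inter_eq_left.mpr hT]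
        have : p.2 ∩ A = ∅ := Finset.disjoint_iff_inter_eq_empty.mp (hAB.symm.mono hU le_rfl)
        rw [this, Finset.union_empty]
      have h2 : (p.1 ∪ p.2) ∩ B = p.2 := by
        rw [Finset.union_inter_distrib_right, Finset.inter_eq_left.mpr hU]
        have : p.1 ∩ B = ∅ := Finset.disjoint_iff_inter_eq_empty.mp (hAB.mono hT le_rfl)
        rw [this, Finset.empty_union]
      exact Prod.ext h1 h2
    · intro S hS
      simp only [Finset.mem_filter, Finset.mem_powerset] at hS
      obtain ⟨hSsub, _⟩ := hS
      have hdisjS : Disjoint (S ∩ A) (S ∩ B) :=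
        hAB.mono Finset.inter_subset_right Finset.inter_subset_right
      have hSeq : S = (S ∩ A) ∪ (S ∩ B) := by
        rw [← Finset.inter_union_distrib_left, hABc, Finset.inter_eq_left.mpr hSsub]
      have hcompl : (S ∪ {i})ᶜ = (A \ (S ∩ A)) ∪ (B \ (S ∩ B)) := by
        have e1 : A \ (S ∩ A) = A \ S := by
          rw [Finset.inter_comm, Finset.sdiff_inter_self_left]
        have e2 : B \ (S ∩ B) = B \ S := by
          rw [Finset.inter_comm, Finset.sdiff_inter_self_left]
        rw [e1, e2, ← Finset.union_sdiff_distrib, hABc]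
        ext j
        simp only [Finset.mem_compl, Finset.mem_union, Finset.mem_singleton,
          Finset.mem_sdiff]
        tauto
      have hdisjC : Disjoint (A \ (S ∩ A)) (B \ (S ∩ B)) :=
        hAB.mono (Finset.sdiff_subset) (Finset.sdiff_subset)
      calc (∏ j ∈ S, w j) * ∏ j ∈ (S ∪ {i})ᶜ, (1 - w j)
          = (∏ j ∈ (S ∩ A) ∪ (S ∩ B), w j) *
            ∏ j ∈ (A \ (S ∩ A)) ∪ (B \ (S ∩ B)), (1 - w j) := by
            rw [← hSeq, ← hcompl]
        _ = ((∏ t ∈ S ∩ A, w t) * ∏ t ∈ A \ (S ∩ A), (1 - w t)) *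
            ((∏ j ∈ S ∩ B, w j) * ∏ j ∈ B \ (S ∩ B), (1 - w j)) := by
            rw [Finset.prod_union hdisjS, Finset.prod_union hdisjC]
            ring
  rw [key, Finset.sum_product]
  apply Finset.sum_congr rfl
  intro T hT
  show ∑ y ∈ B.powerset, ((∏ t ∈ T, w t) * ∏ t ∈ A \ T, (1 - w t)) *
      ((∏ j ∈ y, w j) * ∏ j ∈ B \ y, (1 - w j)) = _
  rw [← Finset.mul_sum, hone, mul_one]
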